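/- (Gradient correlation in time.) Let H be a real inner product space, T > 0, R > 0, and let g : ℝ → H satisfy the gradient correlation assumption: for all t and δ with t, t+δ ∈ [0,T] and |δ| ≤ R, ⟨g(t), g(t+δ)⟩ ≥ 0. Let k ≥ 1 and let δt₁, …, δt_k ∈ ℝ satisfy |δt_i| ≤ R/3 for all i. Define the temporally averaged map g^time(t) = g(t) + (1/k)·Σ_{i=1}^k g(t + δt_i). Then for every t and δt with |δt| ≤ R/3 such that all of the points t, t+δt, t+δt_i, t+δt+δt_j (for 1 ≤ i, j ≤ k) lie in [0,T], the averaged correlation dominates the pointwise correlation: ⟨g(t), g(t+δt)⟩ ≤ ⟨g^time(t), g^time(t+δt)⟩. -/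
import Mathlib


open scoped RealInnerProductSpace

/-- **Gradient correlation in time (Theorem 3.2 / `them:grad_cor_time`).**
Under the gradient correlation assumption (nonnegative inner products of
gradients at times within distance `R` of each other in `[0,T]`), the
temporally averaged gradient `g^time(t) = g t + (1/k) ∑ᵢ g (t + δtᵢ)` with
perturbations `|δtᵢ| ≤ R/3` has correlation dominating the pointwise one:
`⟪g t, g (t+δ)⟫ ≤ ⟪g^time t, g^time (t+δ)⟫` for `|δ| ≤ R/3`, provided all the
involved time points lie in `[0,T]`. -/
theorem gradient_correlation_time_averaging
    {H : Type*} [NormedAddCommGroup H] [InnerProductSpace ℝ H]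
    (T R : ℝ) (hT : 0 < T) (hR : 0 < R) (g : ℝ → H)
    (hcorr : ∀ t δ : ℝ, t ∈ Set.Icc (0 : ℝ) T → t + δ ∈ Set.Icc (0 : ℝ) T →
      |δ| ≤ R → 0 ≤ ⟪g t, g (t + δ)⟫)
    (k : ℕ) (hk : 1 ≤ k) (δt : Fin k → ℝ) (hδt : ∀ i, |δt i| ≤ R / 3)
    (t δ : ℝ) (hδ : |δ| ≤ R / 3)
    (ht : t ∈ Set.Icc (0 : ℝ) T) (htδ : t + δ ∈ Set.Icc (0 : ℝ) T)
    (hti : ∀ i, t + δt i ∈ Set.Icc (0 : ℝ) T)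
    (htδj : ∀ j, t + δ + δt j ∈ Set.Icc (0 : ℝ) T) :
    ⟪g t, g (t + δ)⟫
      ≤ ⟪g t + (1 / (k : ℝ)) • ∑ i, g (t + δt i),
          g (t + δ) + (1 / (k : ℝ)) • ∑ j, g (t + δ + δt j)⟫ := by
  have key : ∀ s₁ s₂ : ℝ, s₁ ∈ Set.Icc (0 : ℝ) T → s₂ ∈ Set.Icc (0 : ℝ) T →
      |s₂ - s₁| ≤ R → 0 ≤ ⟪g s₁, g s₂⟫ := by
    intro s₁ s₂ h1 h2 h3
    have := hcorr s₁ (s₂ - s₁) h1 (by simpa using h2) h3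
    simpa using this
  have hkpos : (0 : ℝ) ≤ 1 / (k : ℝ) := by positivity
  have h1 : 0 ≤ ⟪g t, (1 / (k : ℝ)) • ∑ j, g (t + δ + δt j)⟫ := by
    rw [real_inner_smul_right]
    refine mul_nonneg hkpos ?_
    rw [inner_sum]
    refine Finset.sum_nonneg fun j _ => key t _ ht (htδj j) ?_
    have := hδt j
    rw [show t + δ + δt j - t = δ + δt j by ring]
    calc |δ + δt j| ≤ |δ| + |δt j| := abs_add_le _ _
      _ ≤ R / 3 + R / 3 := add_le_add hδ this
      _ ≤ R := by linarith
  have h2 : 0 ≤ ⟪(1 / (k : ℝ)) • ∑ i, g (t + δt i), g (t + δ)⟫ := by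
    rw [real_inner_smul_left]
    refine mul_nonneg hkpos ?_
    rw [sum_inner]
    refine Finset.sum_nonneg fun i _ => key _ _ (hti i) htδ ?_
    have := hδt i
    rw [show t + δ - (t + δt i) = δ - δt i by ring]
    calc |δ - δt i| ≤ |δ| + |δt i| := abs_sub _ _
      _ ≤ R / 3 + R / 3 := add_le_add hδ this
      _ ≤ R := by linarith
  have h3 : 0 ≤ ⟪(1 / (k : ℝ)) • ∑ i, g (t + δt i),
      (1 / (k : ℝ)) • ∑ j, g (t + δ + δt j)⟫ := by
    rw [real_inner_smul_left, real_inner_smul_right]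
    refine mul_nonneg hkpos (mul_nonneg hkpos ?_)
    rw [sum_inner]
    refine Finset.sum_nonneg fun i _ => ?_
    rw [inner_sum]
    refine Finset.sum_nonneg fun j _ => key _ _ (hti i) (htδj j) ?_
    have hi := hδt i; have hj := hδt j
    rw [show t + δ + δt j - (t + δt i) = δ + δt j - δt i by ring]
    calc |δ + δt j - δt i| ≤ |δ + δt j| + |δt i| := abs_sub _ _
      _ ≤ |δ| + |δt j| + |δt i| := by linarith [abs_add_le δ (δt j)]
      _ ≤ R / 3 + R / 3 + R / 3 := by linarith
      _ ≤ R := by linarith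
  rw [inner_add_left, inner_add_right, inner_add_right]
  linarith
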